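/- Let σ_1, …, σ_n be distinct positive real numbers and k ≥ 3. Define the linear map 𝒜 : ℝ^{n^k} → ℝ^{#(all classes)} × ℝ^{#(off-diagonal classes)} by 𝒜(w) = ( (2 Σ_{t∈C} w_t)_{C any class}, (2 Σ_{t∈C} σ_{t(k)}² w_t)_{C off-diagonal class} ). Then 𝒜 is surjective; equivalently, the family of vectors {1_C : C any class} ∪ {r̂_C : C off-diagonal class}, where r̂_C has entries σ_{t(k)}² on C and 0 elsewhere, is linearly independent in ℝ^{n^k}. In particular, the underdetermined linear system 𝒜(w) = b (the input-normal/output-diagonal equations for the transformation coefficient) has a solution w for every right-hand side b. -/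

import Mathlib

open Finset
open scoped Classical

/-- Two index tuples are equivalent if one is a rearrangement of the other. -/
def permSetoid (n k : ℕ) : Setoid (Fin k → Fin n) where
  r t s := ∃ π : Equiv.Perm (Fin k), s = t ∘ ⇑π
  iseqv := by
    refine ⟨fun t => ⟨1, ?_⟩, ?_, ?_⟩
    · ext i; simp
    · rintro t s ⟨π, rfl⟩
      exact ⟨π⁻¹, by ext i; simp⟩
    · rintro t s u ⟨π, rfl⟩ ⟨ρ, rfl⟩
      exact ⟨π * ρ, by ext i; simp [Equiv.Perm.mul_apply]⟩

/-- The permutation-equivalence classes of index tuples (i.e. degree-`k` monomials). -/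
abbrev MonClass (n k : ℕ) := Quotient (permSetoid n k)

/-- A class is off-diagonal if its tuples attain at least two distinct values. -/
def IsOffdiagClass {n k : ℕ} (C : MonClass n k) : Prop :=
  ∃ t : Fin k → Fin n, Quotient.mk (permSetoid n k) t = C ∧ ¬ ∀ a b : Fin k, t a = t b

/-- The finset of tuples belonging to a class `C`. -/
noncomputable def classTuples {n k : ℕ} (C : MonClass n k) : Finset (Fin k → Fin n) :=
  Finset.univ.filter (fun t => Quotient.mk (permSetoid n k) t = C)

lemma mem_classTuples {n k : ℕ} {C : MonClass n k} {t : Fin k → Fin n} :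
    t ∈ classTuples C ↔ Quotient.mk (permSetoid n k) t = C := by
  simp [classTuples]

lemma class_comp_perm {n k : ℕ} (t : Fin k → Fin n) (π : Equiv.Perm (Fin k)) :
    Quotient.mk (permSetoid n k) (t ∘ ⇑π) = Quotient.mk (permSetoid n k) t := by
  symm; exact Quotient.sound ⟨π, rfl⟩

lemma exists_reps {n k : ℕ} (hk : 3 ≤ k) {C : MonClass n k} (h : IsOffdiagClass C) :
    ∃ t₁ t₂ : Fin k → Fin n,
      Quotient.mk (permSetoid n k) t₁ = C ∧ Quotient.mk (permSetoid n k) t₂ = C ∧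
      t₁ ⟨k - 1, Nat.sub_lt (by omega) one_pos⟩ ≠ t₂ ⟨k - 1, Nat.sub_lt (by omega) one_pos⟩ := by
  obtain ⟨t, htC, hnc⟩ := h
  push_neg at hnc
  obtain ⟨a, b, hab⟩ := hnc
  refine ⟨t ∘ Equiv.swap a ⟨k - 1, by omega⟩, t ∘ Equiv.swap b ⟨k - 1, by omega⟩,
    by rw [class_comp_perm]; exact htC, by rw [class_comp_perm]; exact htC, ?_⟩
  simpa [Equiv.swap_apply_right] using hab

lemma sq_ne_sq {a b : ℝ} (ha : 0 < a) (hb : 0 < b) (hab : a ≠ b) : a ^ 2 ≠ b ^ 2 := by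
  intro h
  apply hab
  have h1 : (a - b) * (a + b) = 0 := by linear_combination h
  rcases mul_eq_zero.mp h1 with h2 | h2
  · linarith
  · linarith

lemma sum_indic {n k : ℕ} {C : MonClass n k} {u₁ u₂ : Fin k → Fin n}
    (h₁ : u₁ ∈ classTuples C) (h₂ : u₂ ∈ classTuples C) (f : (Fin k → Fin n) → ℝ) (α β : ℝ) :
    ∑ t ∈ classTuples C,
      f t * (α * (if t = u₁ then 1 else 0) + β * (if t = u₂ then 1 else 0)) =
      α * f u₁ + β * f u₂ := by
  simp only [mul_add, Finset.sum_add_distrib, mul_ite, mul_one, mul_zero,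
    Finset.sum_ite_eq', h₁, h₂, if_true]
  ring

lemma solve2 {s₁ s₂ p q : ℝ} (h : s₁ - s₂ ≠ 0) :
    2 * ((q / 2 - s₂ * (p / 2)) / (s₁ - s₂) * s₁ +
      (p / 2 - (q / 2 - s₂ * (p / 2)) / (s₁ - s₂)) * s₂) = q := by
  field_simp
  ring


/-- For distinct positive `σ_1, …, σ_n` and `k ≥ 3`, the linear map
`𝒜(w) = ((2 Σ_{t∈C} w_t)_C, (2 Σ_{t∈C} σ_{t(k)}² w_t)_{C off-diagonal})` is surjective
(the input-normal/output-diagonal equations are solvable for every right-hand side);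
equivalently, the family `{1_C} ∪ {r̂_C : C off-diagonal}` is linearly independent. -/
theorem inod_equations_solvable {n k : ℕ} (hk : 3 ≤ k)
    (σ : Fin n → ℝ) (hσpos : ∀ i, 0 < σ i) (hσinj : Function.Injective σ) :
    (∀ (b₁ : MonClass n k → ℝ) (b₂ : {C : MonClass n k // IsOffdiagClass C} → ℝ),
      ∃ w : (Fin k → Fin n) → ℝ,
        (∀ C : MonClass n k, 2 * ∑ t ∈ classTuples C, w t = b₁ C) ∧
        (∀ C : {C : MonClass n k // IsOffdiagClass C},
          2 * ∑ t ∈ classTuples C.1, σ (t ⟨k - 1, by omega⟩) ^ 2 * w t = b₂ C)) ∧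
    LinearIndependent ℝ
      (fun i : MonClass n k ⊕ {C : MonClass n k // IsOffdiagClass C} =>
        Sum.elim
          (fun C : MonClass n k => fun t : Fin k → Fin n =>
            if Quotient.mk (permSetoid n k) t = C then (1 : ℝ) else 0)
          (fun C : {C : MonClass n k // IsOffdiagClass C} => fun t : Fin k → Fin n =>
            if Quotient.mk (permSetoid n k) t = C.1 then σ (t ⟨k - 1, by omega⟩) ^ 2 else 0)
          i) := by
  have hlast : k - 1 < k := by omega
  have hsq : ∀ i j : Fin n, i ≠ j → σ i ^ 2 ≠ σ j ^ 2 :=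
    fun i j hij => sq_ne_sq (hσpos i) (hσpos j) (fun h => hij (hσinj h))
  choose T₁ T₂ hT₁ hT₂ hTne using fun (C : MonClass n k) (h : IsOffdiagClass C) =>
    exists_reps hk h
  have hsne : ∀ (C : MonClass n k) (h : IsOffdiagClass C),
      σ (T₁ C h ⟨k - 1, hlast⟩) ^ 2 - σ (T₂ C h ⟨k - 1, hlast⟩) ^ 2 ≠ 0 :=
    fun C h => sub_ne_zero.mpr (hsq _ _ (hTne C h))
  constructor
  · intro b₁ b₂
    set U₁ : MonClass n k → (Fin k → Fin n) :=
      fun C => if h : IsOffdiagClass C then T₁ C h else Quotient.out C with hU₁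
    set U₂ : MonClass n k → (Fin k → Fin n) :=
      fun C => if h : IsOffdiagClass C then T₂ C h else Quotient.out C with hU₂
    set α : MonClass n k → ℝ := fun C =>
      if h : IsOffdiagClass C then
        (b₂ ⟨C, h⟩ / 2 - σ (T₂ C h ⟨k - 1, hlast⟩) ^ 2 * (b₁ C / 2)) /
          (σ (T₁ C h ⟨k - 1, hlast⟩) ^ 2 - σ (T₂ C h ⟨k - 1, hlast⟩) ^ 2)
      else b₁ C / 2 with hα
    set β : MonClass n k → ℝ := fun C => b₁ C / 2 - α C with hβ
    have hU₁mem : ∀ C, U₁ C ∈ classTuples C := by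
      intro C
      rw [mem_classTuples]
      show Quotient.mk (permSetoid n k)
        (if h : IsOffdiagClass C then T₁ C h else Quotient.out C) = C
      by_cases h : IsOffdiagClass C
      · rw [dif_pos h]; exact hT₁ C h
      · rw [dif_neg h]; exact Quotient.out_eq C
    have hU₂mem : ∀ C, U₂ C ∈ classTuples C := by
      intro C
      rw [mem_classTuples]
      show Quotient.mk (permSetoid n k)
        (if h : IsOffdiagClass C then T₂ C h else Quotient.out C) = C
      by_cases h : IsOffdiagClass C
      · rw [dif_pos h]; exact hT₂ C h
      · rw [dif_neg h]; exact Quotient.out_eq C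
    set w : (Fin k → Fin n) → ℝ := fun t =>
      α (Quotient.mk (permSetoid n k) t) *
          (if t = U₁ (Quotient.mk (permSetoid n k) t) then 1 else 0) +
        β (Quotient.mk (permSetoid n k) t) *
          (if t = U₂ (Quotient.mk (permSetoid n k) t) then 1 else 0) with hw
    have hsum : ∀ (C : MonClass n k) (f : (Fin k → Fin n) → ℝ),
        ∑ t ∈ classTuples C, f t * w t = α C * f (U₁ C) + β C * f (U₂ C) := by
      intro C f
      have e : ∀ t ∈ classTuples C, f t * w t =
          f t * (α C * (if t = U₁ C then 1 else 0) + β C * (if t = U₂ C then 1 else 0)) := by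
        intro t ht
        have hc := mem_classTuples.mp ht
        simp only [hw, hc]
      rw [Finset.sum_congr rfl e]
      exact sum_indic (hU₁mem C) (hU₂mem C) f (α C) (β C)
    refine ⟨w, ?_, ?_⟩
    · intro C
      have h1 := hsum C (fun _ => 1)
      simp only [one_mul, mul_one] at h1
      have hβC : β C = b₁ C / 2 - α C := rfl
      rw [h1, hβC]
      ring
    · rintro ⟨C, h⟩
      have h1 := hsum C (fun t => σ (t ⟨k - 1, hlast⟩) ^ 2)
      have hU1C : U₁ C = T₁ C h := dif_pos h
      have hU2C : U₂ C = T₂ C h := dif_pos h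
      have hαC : α C = (b₂ ⟨C, h⟩ / 2 - σ (T₂ C h ⟨k - 1, hlast⟩) ^ 2 * (b₁ C / 2)) /
          (σ (T₁ C h ⟨k - 1, hlast⟩) ^ 2 - σ (T₂ C h ⟨k - 1, hlast⟩) ^ 2) := dif_pos h
      have hβC : β C = b₁ C / 2 - α C := rfl
      rw [h1, hU1C, hU2C, hβC, hαC]
      exact solve2 (hsne C h)
  · rw [Fintype.linearIndependent_iff]
    intro g hg
    have hev : ∀ t : Fin k → Fin n,
        g (Sum.inl (Quotient.mk (permSetoid n k) t)) +
          (if h : IsOffdiagClass (Quotient.mk (permSetoid n k) t) then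
            g (Sum.inr ⟨Quotient.mk (permSetoid n k) t, h⟩) * σ (t ⟨k - 1, hlast⟩) ^ 2
          else 0) = 0 := by
      intro t
      have ht := congrFun hg t
      simp only [Finset.sum_apply, Pi.smul_apply, smul_eq_mul, Pi.zero_apply,
        Fintype.sum_sum_type, Sum.elim_inl, Sum.elim_inr] at ht
      have h1 : (∑ C : MonClass n k,
          g (Sum.inl C) * (if Quotient.mk (permSetoid n k) t = C then (1 : ℝ) else 0)) =
          g (Sum.inl (Quotient.mk (permSetoid n k) t)) := by
        simp [mul_ite, Finset.sum_ite_eq]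
      have h2 : (∑ C : {C : MonClass n k // IsOffdiagClass C},
          g (Sum.inr C) * (if Quotient.mk (permSetoid n k) t = C.1 then
            σ (t ⟨k - 1, hlast⟩) ^ 2 else 0)) =
          (if h : IsOffdiagClass (Quotient.mk (permSetoid n k) t) then
            g (Sum.inr ⟨Quotient.mk (permSetoid n k) t, h⟩) * σ (t ⟨k - 1, hlast⟩) ^ 2
          else 0) := by
        by_cases h : IsOffdiagClass (Quotient.mk (permSetoid n k) t)
        · rw [dif_pos h]
          rw [Finset.sum_eq_single (⟨Quotient.mk (permSetoid n k) t, h⟩ :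
              {C : MonClass n k // IsOffdiagClass C})]
          · simp
          · intro C _ hC
            rw [if_neg, mul_zero]
            intro hEq
            apply hC
            apply Subtype.ext
            exact hEq.symm
          · simp
        · rw [dif_neg h]
          refine Finset.sum_eq_zero fun C _ => ?_
          rw [if_neg, mul_zero]
          intro hEq
          exact h (by rw [hEq]; exact C.2)
      rw [h1, h2] at ht
      exact ht
    have hinr : ∀ (C : MonClass n k) (h : IsOffdiagClass C), g (Sum.inr ⟨C, h⟩) = 0 := by
      intro C h
      have e₁ := hev (T₁ C h)
      have e₂ := hev (T₂ C h)
      rw [hT₁ C h] at e₁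
      rw [hT₂ C h] at e₂
      rw [dif_pos h] at e₁ e₂
      have h3 : g (Sum.inr ⟨C, h⟩) *
          (σ (T₁ C h ⟨k - 1, hlast⟩) ^ 2 - σ (T₂ C h ⟨k - 1, hlast⟩) ^ 2) = 0 := by
        linear_combination e₁ - e₂
      rcases mul_eq_zero.mp h3 with h4 | h4
      · exact h4
      · exact absurd h4 (hsne C h)
    have hinl : ∀ C : MonClass n k, g (Sum.inl C) = 0 := by
      intro C
      by_cases h : IsOffdiagClass C
      · have e := hev (T₁ C h)
        rw [hT₁ C h, dif_pos h, hinr C h] at e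
        linarith
      · have e := hev (Quotient.out C)
        rw [Quotient.out_eq] at e
        rw [dif_neg h] at e
        linarith
    intro i
    cases i with
    | inl C => exact hinl C
    | inr C => simpa using hinr C.1 C.2
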